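/- Let A ∈ ℝ^{n×n} be positive definite (xᵀAx > 0 for all nonzero x), write H = (A + Aᵀ)/2 and S = (A − Aᵀ)/2. Let λ_min and λ_max be the minimum and maximum eigenvalues of the symmetric matrix H, and let μ_max be the maximum of the absolute values of the (complex) eigenvalues of S. Let b ∈ ℝⁿ, θ ∈ [0,1), ω > 0 and Ω = ωI. Suppose x* satisfies Ax* − |x*| − b = 0 and ω + λ_min − 1 > √(ω² + μ_max²) + θ(ω + λ_max + 1 + √(ω² + μ_max²)). Then any sequence {x^k} in ℝⁿ satisfying ‖(ωI + H)x^{k+1} − [(ωI − S)x^k + |x^k| + b]‖ ≤ θ‖Ax^k − |x^k| − b‖ for all k ≥ 0 converges linearly to x*, and x* is the unique solution of the AVE Ax − |x| − b = 0. -/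

import Mathlib

open Matrix Filter

/-- Componentwise absolute value of a vector in Euclidean space. -/
noncomputable def vabs {n : ℕ} (x : EuclideanSpace ℝ (Fin n)) : EuclideanSpace ℝ (Fin n) :=
  WithLp.toLp 2 (fun i => |x i|)

/-- A matrix acting on Euclidean space (so that vector norms are the Euclidean 2-norm). -/
noncomputable def mulV {n : ℕ} (M : Matrix (Fin n) (Fin n) ℝ) (x : EuclideanSpace ℝ (Fin n)) :
    EuclideanSpace ℝ (Fin n) :=
  Matrix.toEuclideanCLM (𝕜 := ℝ) M x

/-- Spectral norm of a real matrix: the operator norm induced by the Euclidean vector norm. -/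
noncomputable def spec {n : ℕ} (M : Matrix (Fin n) (Fin n) ℝ) : ℝ :=
  ‖Matrix.toEuclideanCLM (𝕜 := ℝ) M‖

/-- The GAVE residual function `F(x) = A x − B |x| − b`. -/
noncomputable def gaveF {n : ℕ} (A B : Matrix (Fin n) (Fin n) ℝ)
    (b : EuclideanSpace ℝ (Fin n)) (x : EuclideanSpace ℝ (Fin n)) : EuclideanSpace ℝ (Fin n) :=
  mulV A x - mulV B (vabs x) - b

/-- The AVE residual function `A x − |x| − b` (the GAVE with `B = I`). -/
noncomputable def aveF {n : ℕ} (A : Matrix (Fin n) (Fin n) ℝ)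
    (b : EuclideanSpace ℝ (Fin n)) (x : EuclideanSpace ℝ (Fin n)) : EuclideanSpace ℝ (Fin n) :=
  mulV A x - vabs x - b

/-- A sequence converges linearly to `xs`: the distances to `xs` contract by a fixed
factor `c < 1` at every step, and the sequence tends to `xs`. -/
def ConvergesLinearlyTo {n : ℕ} (x : ℕ → EuclideanSpace ℝ (Fin n))
    (xs : EuclideanSpace ℝ (Fin n)) : Prop :=
  (∃ c : ℝ, 0 ≤ c ∧ c < 1 ∧ ∀ k : ℕ, ‖x (k + 1) - xs‖ ≤ c * ‖x k - xs‖) ∧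
    Tendsto x atTop (nhds xs)

/- ### Auxiliary lemmas -/

lemma mulV_vsub {n : ℕ} (M : Matrix (Fin n) (Fin n) ℝ) (x y : EuclideanSpace ℝ (Fin n)) :
    mulV M (x - y) = mulV M x - mulV M y := by simp [mulV]

lemma mulV_msub {n : ℕ} (M N : Matrix (Fin n) (Fin n) ℝ) (x : EuclideanSpace ℝ (Fin n)) :
    mulV (M - N) x = mulV M x - mulV N x := by simp [mulV]

lemma enorm_sq {n : ℕ} (y : EuclideanSpace ℝ (Fin n)) :
    ‖y‖ ^ 2 = (fun i => y i) ⬝ᵥ (fun i => y i) := by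
  rw [EuclideanSpace.norm_eq, Real.sq_sqrt (by positivity)]
  simp [dotProduct, Real.norm_eq_abs, sq_abs, pow_two]

lemma unitary_dot {n : ℕ} (U : Matrix (Fin n) (Fin n) ℝ) (hU : Uᵀ * U = 1)
    (x y : Fin n → ℝ) : (U *ᵥ x) ⬝ᵥ (U *ᵥ y) = x ⬝ᵥ y := by
  rw [Matrix.dotProduct_mulVec, Matrix.vecMul_mulVec, hU, Matrix.vecMul_one]

lemma herm_decomp {n : ℕ} {G : Matrix (Fin n) (Fin n) ℝ} (hG : G.IsHermitian) (v : Fin n → ℝ) :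
    ∃ w : Fin n → ℝ, w ⬝ᵥ w = v ⬝ᵥ v ∧
      v ⬝ᵥ (G *ᵥ v) = ∑ i, hG.eigenvalues i * w i ^ 2 ∧
      ∀ c : ℝ, (c • v + G *ᵥ v) ⬝ᵥ (c • v + G *ᵥ v) = ∑ i, (c + hG.eigenvalues i) ^ 2 * w i ^ 2 := by
  set U : Matrix (Fin n) (Fin n) ℝ := (hG.eigenvectorUnitary : Matrix (Fin n) (Fin n) ℝ) with hUdef
  have hstar : star U = Uᵀ := by
    rw [Matrix.star_eq_conjTranspose]
    ext i j
    simp [Matrix.conjTranspose_apply]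
  have hU : Uᵀ * U = 1 := by
    rw [← hstar]; exact Matrix.mem_unitaryGroup_iff'.mp hG.eigenvectorUnitary.2
  have hU2 : U * Uᵀ = 1 := by
    rw [← hstar]; exact Matrix.mem_unitaryGroup_iff.mp hG.eigenvectorUnitary.2
  set w : Fin n → ℝ := Uᵀ *ᵥ v with hw
  have hv : U *ᵥ w = v := by
    rw [hw, Matrix.mulVec_mulVec, hU2, Matrix.one_mulVec]
  have hGv : G *ᵥ v = U *ᵥ (fun i => hG.eigenvalues i * w i) := by
    conv_lhs => rw [hG.spectral_theorem]
    rw [Unitary.conjStarAlgAut_apply, ← hUdef, hstar, ← Matrix.mulVec_mulVec, ← Matrix.mulVec_mulVec, ← hw]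
    have : Matrix.diagonal (RCLike.ofReal ∘ hG.eigenvalues) *ᵥ w
        = fun i => hG.eigenvalues i * w i := by
      funext i
      simp [Matrix.mulVec_diagonal]
    rw [this]
  refine ⟨w, ?_, ?_, ?_⟩
  · rw [← hv, unitary_dot U hU]
  · conv_lhs => rw [hGv, ← hv]
    rw [unitary_dot U hU]
    simp only [dotProduct]
    exact Finset.sum_congr rfl fun i _ => by ring
  · intro c
    have he : c • v + G *ᵥ v = U *ᵥ (fun i => (c + hG.eigenvalues i) * w i) := by
      rw [hGv, ← hv, ← Matrix.mulVec_smul, ← Matrix.mulVec_add]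
      have : c • w + (fun i => hG.eigenvalues i * w i)
          = fun i => (c + hG.eigenvalues i) * w i := by
        funext i
        simp [add_mul, mul_comm]
      rw [this]
    rw [he, unitary_dot U hU]
    simp only [dotProduct]
    exact Finset.sum_congr rfl fun i _ => by ring

lemma spec_of_det_eq_zero {n : ℕ} {B : Matrix (Fin n) (Fin n) ℂ} {c : ℂ}
    (h : (B - c • 1).det = 0) : c ∈ spectrum ℂ B := by
  rw [spectrum.mem_iff]
  intro hu
  rw [Matrix.isUnit_iff_isUnit_det] at hu
  have he : algebraMap ℂ (Matrix (Fin n) (Fin n) ℂ) c - B = -(B - c • 1) := by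
    rw [Algebra.algebraMap_eq_smul_one, neg_sub]
  rw [he, Matrix.det_neg, h, mul_zero] at hu
  simp at hu

lemma skew_eig_bound {n : ℕ} {S : Matrix (Fin n) (Fin n) ℝ} (hskew : Sᵀ = -S)
    {mumax : ℝ}
    (hmu : IsGreatest ((fun z : ℂ => ‖z‖) ''
      spectrum ℂ (S.map ((↑) : ℝ → ℂ))) mumax)
    (hG : (Sᵀ * S).IsHermitian) (i : Fin n) : hG.eigenvalues i ≤ mumax ^ 2 := by
  set ν := hG.eigenvalues i with hν
  set bv : Fin n → ℝ := ⇑(hG.eigenvectorBasis i) with hbv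
  have hb : (Sᵀ * S) *ᵥ bv = ν • bv := hG.mulVec_eigenvectorBasis i
  have hbne : bv ≠ 0 := by
    intro h
    exact hG.eigenvectorBasis.orthonormal.ne_zero i (by ext j; exact congrFun h j)
  have hbb : 0 < bv ⬝ᵥ bv := by
    rcases lt_or_eq_of_le (Finset.sum_nonneg (fun j _ => mul_self_nonneg (bv j)) :
        (0:ℝ) ≤ bv ⬝ᵥ bv) with h | h
    · exact h
    · exact absurd (dotProduct_self_eq_zero.mp h.symm) hbne
  have hq : (0:ℝ) ≤ (S *ᵥ bv) ⬝ᵥ (S *ᵥ bv) :=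
    Finset.sum_nonneg fun j _ => mul_self_nonneg _
  have hν0 : 0 ≤ ν := by
    have h1 : bv ⬝ᵥ ((Sᵀ * S) *ᵥ bv) = (S *ᵥ bv) ⬝ᵥ (S *ᵥ bv) := by
      rw [← Matrix.mulVec_mulVec, Matrix.dotProduct_mulVec, Matrix.vecMul_transpose]
    have h2 : bv ⬝ᵥ (ν • bv) = ν * (bv ⬝ᵥ bv) := by
      rw [dotProduct_smul, smul_eq_mul]
    rw [hb, h2] at h1
    by_contra hneg
    have := mul_neg_of_neg_of_pos (lt_of_not_ge hneg) hbb
    rw [h1] at this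
    linarith
  have hdet : ((Sᵀ * S) - ν • 1).det = 0 := by
    rw [← Matrix.exists_mulVec_eq_zero_iff]
    refine ⟨bv, hbne, ?_⟩
    rw [Matrix.sub_mulVec, hb, Matrix.smul_mulVec, Matrix.one_mulVec, sub_self]
  set B : Matrix (Fin n) (Fin n) ℂ := S.map ((↑) : ℝ → ℂ) with hB
  have hdetC : (((Sᵀ * S) - ν • 1).map ((↑) : ℝ → ℂ)).det = 0 := by
    have h0 := congrArg (algebraMap ℝ ℂ) hdet
    rw [RingHom.map_det, map_zero, RingHom.mapMatrix_apply] at h0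
    convert h0 using 3
    exact Complex.coe_algebraMap.symm
  have hmap : ((Sᵀ * S) - ν • 1).map ((↑) : ℝ → ℂ) = -(B * B) - (ν : ℂ) • 1 := by
    ext i j
    simp only [Matrix.map_apply, Matrix.sub_apply, Matrix.smul_apply, Matrix.one_apply,
      Matrix.mul_apply, Matrix.neg_apply, smul_eq_mul, hB, Matrix.transpose_apply, hskew]
    push_cast
    simp [Finset.sum_neg_distrib, apply_ite (Complex.ofReal)]
  set c : ℂ := Complex.I * Real.sqrt ν with hc
  have hcc : c * c = -(ν : ℂ) := by
    rw [hc, mul_mul_mul_comm, Complex.I_mul_I, ← Complex.ofReal_mul,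
      Real.mul_self_sqrt hν0]
    ring
  have hfact : -(B * B) - (ν : ℂ) • 1 = -((B - c • 1) * (B + c • 1)) := by
    have expand : (B - c • 1) * (B + c • 1) = B * B - (c * c) • 1 := by
      have h11 : (c • (1 : Matrix (Fin n) (Fin n) ℂ)) * (c • 1) = (c * c) • 1 := by
        rw [smul_mul_assoc, one_mul, smul_smul]
      rw [sub_mul, mul_add, mul_add, smul_mul_assoc, mul_smul_comm, one_mul, mul_one, h11]
      abel
    rw [expand, hcc]
    module
  have hdet2 : (B - c • 1).det * (B + c • 1).det = 0 := by
    have : (-((B - c • 1) * (B + c • 1))).det = 0 := by rw [← hfact, ← hmap]; exact hdetC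
    rw [Matrix.det_neg, Matrix.det_mul] at this
    rcases mul_eq_zero.mp this with h | h
    · exact absurd h (by simp [pow_ne_zero])
    · exact h
  have habs : Real.sqrt ν ≤ mumax := by
    rcases mul_eq_zero.mp hdet2 with h | h
    · have hc1 : c ∈ spectrum ℂ B := spec_of_det_eq_zero h
      have := hmu.2 ⟨c, hc1, rfl⟩
      simpa [hc, Complex.norm_I, Complex.norm_real, Real.norm_eq_abs,
        abs_of_nonneg (Real.sqrt_nonneg ν)] using this
    · have hc1 : (-c) ∈ spectrum ℂ B := spec_of_det_eq_zero (by
        have : B - (-c) • 1 = B + c • 1 := by module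
        rw [this]; exact h)
      have := hmu.2 ⟨-c, hc1, rfl⟩
      simpa [hc, Complex.norm_I, Complex.norm_real, Real.norm_eq_abs,
        abs_of_nonneg (Real.sqrt_nonneg ν)] using this
  calc ν = Real.sqrt ν ^ 2 := (Real.sq_sqrt hν0).symm
    _ ≤ mumax ^ 2 := by
        have h0 : (0:ℝ) ≤ Real.sqrt ν := Real.sqrt_nonneg ν
        nlinarith

lemma vabs_lip {n : ℕ} (u v : EuclideanSpace ℝ (Fin n)) :
    ‖vabs u - vabs v‖ ≤ ‖u - v‖ := by
  rw [EuclideanSpace.norm_eq, EuclideanSpace.norm_eq]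
  apply Real.sqrt_le_sqrt
  apply Finset.sum_le_sum
  intro i _
  have h1 : (vabs u - vabs v) i = |u i| - |v i| := rfl
  have h2 : (u - v) i = u i - v i := rfl
  rw [h1, h2, Real.norm_eq_abs, Real.norm_eq_abs, sq_abs, sq_abs]
  have h := abs_abs_sub_abs_le_abs_sub (u i) (v i)
  calc (|u i| - |v i|) ^ 2 = (abs (|u i| - |v i|)) ^ 2 := (sq_abs _).symm
    _ ≤ |u i - v i| ^ 2 := by
        have h2 := abs_nonneg (|u i| - |v i|)
        nlinarith
    _ = (u i - v i) ^ 2 := sq_abs _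

set_option maxHeartbeats 1000000 in
theorem stmt14 {n : ℕ} (A H S : Matrix (Fin n) (Fin n) ℝ)
    (b : EuclideanSpace ℝ (Fin n))
    (hposdef : ∀ v : Fin n → ℝ, v ≠ 0 → 0 < v ⬝ᵥ A.mulVec v)
    (hH : H = (2 : ℝ)⁻¹ • (A + Aᵀ)) (hS : S = (2 : ℝ)⁻¹ • (A - Aᵀ))
    (lammin lammax mumax : ℝ)
    (hmin : IsLeast (spectrum ℝ H) lammin) (hmax : IsGreatest (spectrum ℝ H) lammax)
    (hmu : IsGreatest ((fun z : ℂ => ‖z‖) ''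
      spectrum ℂ (S.map ((↑) : ℝ → ℂ))) mumax)
    (θ ω : ℝ) (hθ0 : 0 ≤ θ) (hθ1 : θ < 1) (hω : 0 < ω)
    (xs : EuclideanSpace ℝ (Fin n)) (hxs : aveF A b xs = 0)
    (hcond : ω + lammin - 1 > Real.sqrt (ω ^ 2 + mumax ^ 2) +
      θ * (ω + lammax + 1 + Real.sqrt (ω ^ 2 + mumax ^ 2))) :
    (∀ x : ℕ → EuclideanSpace ℝ (Fin n),
      (∀ k : ℕ, ‖mulV (ω • (1 : Matrix (Fin n) (Fin n) ℝ) + H) (x (k + 1)) -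
          (mulV (ω • (1 : Matrix (Fin n) (Fin n) ℝ) - S) (x k) + vabs (x k) + b)‖ ≤
        θ * ‖aveF A b (x k)‖) →
      ConvergesLinearlyTo x xs) ∧
      ∀ y : EuclideanSpace ℝ (Fin n), aveF A b y = 0 → y = xs := by
  rcases Nat.eq_zero_or_pos n with hn | hn
  · subst hn
    exfalso
    have h := hmin.1
    rw [spectrum.mem_iff] at h
    exact h (isUnit_of_subsingleton _)
  -- basic structure facts
  have hHt : Hᵀ = H := by
    subst hH; simp [Matrix.transpose_smul, Matrix.transpose_add]; module
  have hSt : Sᵀ = -S := by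
    subst hS; simp [Matrix.transpose_smul, Matrix.transpose_sub]; module
  have hAHS : H + S = A := by subst hH hS; module
  have hHs : H.IsHermitian := hHt
  have hGs : (Sᵀ * S).IsHermitian := Matrix.isHermitian_conjTranspose_mul_self S
  set r : ℝ := Real.sqrt (ω ^ 2 + mumax ^ 2) with hr
  have hr0 : 0 ≤ r := Real.sqrt_nonneg _
  -- eigenvalue bounds of H
  have heig : ∀ i, lammin ≤ hHs.eigenvalues i ∧ hHs.eigenvalues i ≤ lammax := fun i =>
    ⟨hmin.2 (hHs.eigenvalues_mem_spectrum_real i), hmax.2 (hHs.eigenvalues_mem_spectrum_real i)⟩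
  have hlml : lammin ≤ lammax := by
    have h := heig ⟨0, hn⟩
    linarith [h.1, h.2]
  -- sign conditions
  have hstuff : 0 ≤ ω + lammax + 1 + r := by
    by_contra hneg
    push_neg at hneg
    have h1 : 1 * (ω + lammax + 1 + r) ≤ θ * (ω + lammax + 1 + r) :=
      mul_le_mul_of_nonpos_right (le_of_lt hθ1) (le_of_lt hneg)
    nlinarith
  have hθs : 0 ≤ θ * (ω + lammax + 1 + r) := mul_nonneg hθ0 hstuff
  have hpos : 0 < ω + lammin := by nlinarith
  have hpos2 : 0 ≤ ω + lammax := by nlinarith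
  -- bound on S
  have hSb : ∀ v : Fin n → ℝ, (S *ᵥ v) ⬝ᵥ (S *ᵥ v) ≤ mumax ^ 2 * (v ⬝ᵥ v) := by
    intro v
    have h1 : v ⬝ᵥ ((Sᵀ * S) *ᵥ v) = (S *ᵥ v) ⬝ᵥ (S *ᵥ v) := by
      rw [← Matrix.mulVec_mulVec, Matrix.dotProduct_mulVec, Matrix.vecMul_transpose]
    obtain ⟨w, hww, hsum, -⟩ := herm_decomp hGs v
    rw [← h1, hsum]
    calc ∑ i, hGs.eigenvalues i * w i ^ 2 ≤ ∑ i, mumax ^ 2 * w i ^ 2 :=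
          Finset.sum_le_sum fun i _ =>
            mul_le_mul_of_nonneg_right (skew_eig_bound hSt hmu hGs i) (sq_nonneg _)
      _ = mumax ^ 2 * (w ⬝ᵥ w) := by
          simp only [dotProduct, Finset.mul_sum]
          exact Finset.sum_congr rfl fun i _ => by ring
      _ = mumax ^ 2 * (v ⬝ᵥ v) := by rw [hww]
  -- norm bounds
  have hMlow : ∀ y : EuclideanSpace ℝ (Fin n),
      (ω + lammin) * ‖y‖ ≤ ‖mulV (ω • 1 + H) y‖ := by
    intro y
    set v : Fin n → ℝ := fun i => y i with hv
    have hfun : (fun i => mulV (ω • 1 + H) y i) = ω • v + H *ᵥ v := by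
      funext i
      show ((ω • 1 + H) *ᵥ v) i = _
      rw [Matrix.add_mulVec, Matrix.smul_mulVec, Matrix.one_mulVec]
    obtain ⟨w, hww, -, hq⟩ := herm_decomp hHs v
    have hnorm2 : ‖mulV (ω • 1 + H) y‖ ^ 2 = ∑ i, (ω + hHs.eigenvalues i) ^ 2 * w i ^ 2 := by
      rw [enorm_sq, hfun, hq ω]
    have hy2 : ‖y‖ ^ 2 = ∑ i, w i ^ 2 := by
      rw [enorm_sq, ← hv, ← hww]
      simp [dotProduct, pow_two]
    refine le_of_pow_le_pow_left₀ two_ne_zero (norm_nonneg _) ?_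
    rw [mul_pow, hnorm2, hy2, Finset.mul_sum]
    refine Finset.sum_le_sum fun i _ => ?_
    have h1 := (heig i).1
    exact mul_le_mul_of_nonneg_right
      (pow_le_pow_left₀ (le_of_lt hpos) (by linarith) 2) (sq_nonneg _)
  have hMhigh : ∀ y : EuclideanSpace ℝ (Fin n),
      ‖mulV (ω • 1 + H) y‖ ≤ (ω + lammax) * ‖y‖ := by
    intro y
    set v : Fin n → ℝ := fun i => y i with hv
    have hfun : (fun i => mulV (ω • 1 + H) y i) = ω • v + H *ᵥ v := by
      funext i
      show ((ω • 1 + H) *ᵥ v) i = _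
      rw [Matrix.add_mulVec, Matrix.smul_mulVec, Matrix.one_mulVec]
    obtain ⟨w, hww, -, hq⟩ := herm_decomp hHs v
    have hnorm2 : ‖mulV (ω • 1 + H) y‖ ^ 2 = ∑ i, (ω + hHs.eigenvalues i) ^ 2 * w i ^ 2 := by
      rw [enorm_sq, hfun, hq ω]
    have hy2 : ‖y‖ ^ 2 = ∑ i, w i ^ 2 := by
      rw [enorm_sq, ← hv, ← hww]
      simp [dotProduct, pow_two]
    refine le_of_pow_le_pow_left₀ two_ne_zero (mul_nonneg hpos2 (norm_nonneg _)) ?_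
    rw [mul_pow, hnorm2, hy2, Finset.mul_sum]
    refine Finset.sum_le_sum fun i _ => ?_
    have h1 := (heig i).1
    have h2 := (heig i).2
    exact mul_le_mul_of_nonneg_right
      (pow_le_pow_left₀ (by linarith) (by linarith) 2) (sq_nonneg _)
  have hNle : ∀ y : EuclideanSpace ℝ (Fin n),
      ‖mulV (ω • 1 - S) y‖ ≤ r * ‖y‖ := by
    intro y
    set v : Fin n → ℝ := fun i => y i with hv
    have hfun : (fun i => mulV (ω • 1 - S) y i) = ω • v - S *ᵥ v := by
      funext i
      show ((ω • 1 - S) *ᵥ v) i = _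
      rw [Matrix.sub_mulVec, Matrix.smul_mulVec, Matrix.one_mulVec]
    have hvSv : v ⬝ᵥ (S *ᵥ v) = 0 := by
      have h1 : v ⬝ᵥ (S *ᵥ v) = (Sᵀ *ᵥ v) ⬝ᵥ v := by
        rw [Matrix.dotProduct_mulVec]
        congr 1
        rw [← Matrix.transpose_transpose S, Matrix.vecMul_transpose, Matrix.transpose_transpose]
      rw [hSt, Matrix.neg_mulVec, neg_dotProduct] at h1
      have h2 := dotProduct_comm v (S *ᵥ v)
      linarith
    refine le_of_pow_le_pow_left₀ two_ne_zero (mul_nonneg hr0 (norm_nonneg _)) ?_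
    rw [mul_pow, enorm_sq, hfun, hr, Real.sq_sqrt (by positivity)]
    have hexp : (ω • v - S *ᵥ v) ⬝ᵥ (ω • v - S *ᵥ v)
        = ω ^ 2 * (v ⬝ᵥ v) - 2 * ω * (v ⬝ᵥ (S *ᵥ v)) + (S *ᵥ v) ⬝ᵥ (S *ᵥ v) := by
      simp [sub_dotProduct, dotProduct_sub, smul_dotProduct,
        dotProduct_smul, smul_eq_mul, dotProduct_comm (S *ᵥ v) v]
      ring
    rw [hexp, hvSv]
    have hb1 := hSb v
    have hvv : (0:ℝ) ≤ v ⬝ᵥ v := Finset.sum_nonneg fun j _ => mul_self_nonneg _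
    have hyv : ‖y‖ ^ 2 = v ⬝ᵥ v := enorm_sq y
    rw [hyv]
    nlinarith
  -- relation between M, N and A
  have hMNA : (ω • (1 : Matrix (Fin n) (Fin n) ℝ) + H) - (ω • 1 - S) = A := by
    rw [← hAHS]; module
  have hAle : ∀ y : EuclideanSpace ℝ (Fin n), ‖mulV A y‖ ≤ (ω + lammax + r) * ‖y‖ := by
    intro y
    have h1 : mulV A y = mulV (ω • 1 + H) y - mulV (ω • 1 - S) y := by
      rw [← mulV_msub, hMNA]
    rw [h1]
    calc ‖mulV (ω • 1 + H) y - mulV (ω • 1 - S) y‖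
        ≤ ‖mulV (ω • 1 + H) y‖ + ‖mulV (ω • 1 - S) y‖ := norm_sub_le _ _
      _ ≤ (ω + lammax) * ‖y‖ + r * ‖y‖ := add_le_add (hMhigh y) (hNle y)
      _ = (ω + lammax + r) * ‖y‖ := by ring
  -- residual identity
  have hx2 : mulV A xs = vabs xs + b := by
    have h := hxs
    unfold aveF at h
    rwa [sub_sub, sub_eq_zero] at h
  have hres : ∀ z : EuclideanSpace ℝ (Fin n),
      aveF A b z = mulV A (z - xs) - (vabs z - vabs xs) := by
    intro z
    unfold aveF
    rw [mulV_vsub, hx2]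
    abel
  have hFle : ∀ z : EuclideanSpace ℝ (Fin n),
      ‖aveF A b z‖ ≤ (ω + lammax + r + 1) * ‖z - xs‖ := by
    intro z
    rw [hres z]
    calc ‖mulV A (z - xs) - (vabs z - vabs xs)‖
        ≤ ‖mulV A (z - xs)‖ + ‖vabs z - vabs xs‖ := norm_sub_le _ _
      _ ≤ (ω + lammax + r) * ‖z - xs‖ + ‖z - xs‖ :=
          add_le_add (hAle _) (vabs_lip z xs)
      _ = (ω + lammax + r + 1) * ‖z - xs‖ := by ring
  -- the fixed point relation for M and N
  have hMxs : mulV (ω • 1 + H) xs = mulV (ω • 1 - S) xs + vabs xs + b := by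
    have h1 : mulV (ω • 1 + H) xs - mulV (ω • 1 - S) xs = vabs xs + b := by
      rw [← mulV_msub, hMNA, hx2]
    have := sub_eq_iff_eq_add.mp h1
    rw [this]
    abel
  set c : ℝ := (θ * (ω + lammax + 1 + r) + r + 1) / (ω + lammin) with hcdef
  have hc0 : 0 ≤ c := div_nonneg (by linarith) (le_of_lt hpos)
  have hc1 : c < 1 := (div_lt_one hpos).mpr (by linarith)
  -- the one-step contraction
  have hstep : ∀ z w : EuclideanSpace ℝ (Fin n),
      ‖mulV (ω • 1 + H) w - (mulV (ω • 1 - S) z + vabs z + b)‖ ≤ θ * ‖aveF A b z‖ →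
      ‖w - xs‖ ≤ c * ‖z - xs‖ := by
    intro z w hiter
    have hMid : mulV (ω • 1 + H) (w - xs) =
        (mulV (ω • 1 + H) w - (mulV (ω • 1 - S) z + vabs z + b)) +
          (mulV (ω • 1 - S) (z - xs) + (vabs z - vabs xs)) := by
      rw [mulV_vsub, mulV_vsub, hMxs]
      abel
    have h1 := hMlow (w - xs)
    have h2 : ‖mulV (ω • 1 + H) (w - xs)‖ ≤
        θ * ‖aveF A b z‖ + (r * ‖z - xs‖ + ‖z - xs‖) := by
      rw [hMid]
      calc ‖_ + _‖ ≤ ‖mulV (ω • 1 + H) w - (mulV (ω • 1 - S) z + vabs z + b)‖ +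
            ‖mulV (ω • 1 - S) (z - xs) + (vabs z - vabs xs)‖ := norm_add_le _ _
        _ ≤ θ * ‖aveF A b z‖ + (r * ‖z - xs‖ + ‖z - xs‖) := by
            refine add_le_add hiter ?_
            calc ‖mulV (ω • 1 - S) (z - xs) + (vabs z - vabs xs)‖
                ≤ ‖mulV (ω • 1 - S) (z - xs)‖ + ‖vabs z - vabs xs‖ := norm_add_le _ _
              _ ≤ r * ‖z - xs‖ + ‖z - xs‖ := add_le_add (hNle _) (vabs_lip z xs)
    have h3 : θ * ‖aveF A b z‖ ≤ θ * ((ω + lammax + r + 1) * ‖z - xs‖) :=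
      mul_le_mul_of_nonneg_left (hFle z) hθ0
    have h3' : θ * ((ω + lammax + r + 1) * ‖z - xs‖)
        = (θ * (ω + lammax + 1 + r)) * ‖z - xs‖ := by ring
    have h4 : (ω + lammin) * ‖w - xs‖ ≤
        (θ * (ω + lammax + 1 + r) + r + 1) * ‖z - xs‖ := by
      rw [h3'] at h3
      have hrr : (θ * (ω + lammax + 1 + r)) * ‖z - xs‖ + (r * ‖z - xs‖ + ‖z - xs‖)
          = (θ * (ω + lammax + 1 + r) + r + 1) * ‖z - xs‖ := by ring
      linarith
    rw [hcdef, div_mul_eq_mul_div, le_div_iff₀ hpos, mul_comm]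
    exact h4
  constructor
  · intro x hx
    have hcontr : ∀ k, ‖x (k + 1) - xs‖ ≤ c * ‖x k - xs‖ := fun k =>
      hstep (x k) (x (k + 1)) (hx k)
    refine ⟨⟨c, hc0, hc1, hcontr⟩, ?_⟩
    have hbound : ∀ k, ‖x k - xs‖ ≤ c ^ k * ‖x 0 - xs‖ := by
      intro k
      induction k with
      | zero => simp
      | succ m ih =>
          calc ‖x (m + 1) - xs‖ ≤ c * ‖x m - xs‖ := hcontr m
            _ ≤ c * (c ^ m * ‖x 0 - xs‖) := mul_le_mul_of_nonneg_left ih hc0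
            _ = c ^ (m + 1) * ‖x 0 - xs‖ := by ring
    rw [tendsto_iff_norm_sub_tendsto_zero]
    have hlim : Tendsto (fun k : ℕ => c ^ k * ‖x 0 - xs‖) atTop (nhds 0) := by
      have := (tendsto_pow_atTop_nhds_zero_of_lt_one hc0 hc1).mul_const ‖x 0 - xs‖
      simpa using this
    exact squeeze_zero (fun k => norm_nonneg _) hbound hlim
  · intro y hy
    have h0 : ‖mulV (ω • 1 + H) y - (mulV (ω • 1 - S) y + vabs y + b)‖ ≤
        θ * ‖aveF A b y‖ := by
      have he : mulV (ω • 1 + H) y - (mulV (ω • 1 - S) y + vabs y + b) = aveF A b y := by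
        unfold aveF
        have h1 : mulV (ω • 1 + H) y - mulV (ω • 1 - S) y = mulV A y := by
          rw [← mulV_msub, hMNA]
        calc mulV (ω • 1 + H) y - (mulV (ω • 1 - S) y + vabs y + b)
            = (mulV (ω • 1 + H) y - mulV (ω • 1 - S) y) - vabs y - b := by abel
          _ = mulV A y - vabs y - b := by rw [h1]
      rw [he, hy]
      simp
    have hd := hstep y y h0
    have hd0 : ‖y - xs‖ ≤ 0 := by nlinarith [norm_nonneg (y - xs)]
    have : y - xs = 0 := norm_eq_zero.mp (le_antisymm hd0 (norm_nonneg _))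
    exact sub_eq_zero.mp this
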